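/- Let h be a proper closed convex function on a finite-dimensional Hilbert space, let x̄ be a minimizer of h, and suppose there exist a neighborhood U of x̄ and c > 0 such that dist(x, argmin h) ≤ c (h(x) − h(x̄))^{1/2} for all x ∈ U (quadratic growth / second-order error bound in the level set). Then h satisfies the KL property at x̄ with exponent 1/2; i.e., there exist c' > 0 and a neighborhood V of x̄ such that dist(0, ∂h(x)) ≥ c' (h(x) − h(x̄))^{1/2} for all x ∈ V with h(x) > h(x̄). -/

import Mathlib

open Filter Topology

/-- Convexity for an extended-real-valued function. -/
def ERealConvexOn {E : Type*} [AddCommGroup E] [Module ℝ E] (F : E → EReal) : Prop :=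
  ∀ x y : E, ∀ a b : ℝ, 0 ≤ a → 0 ≤ b → a + b = 1 →
    F (a • x + b • y) ≤ (a : EReal) * F x + (b : EReal) * F y

/-- for a proper closed convex function, a quadratic-growth error bound at a
minimizer implies the KL property with exponent 1/2 there. -/
theorem stmt8 {H : Type*}
    [NormedAddCommGroup H] [InnerProductSpace ℝ H] [FiniteDimensional ℝ H]
    (h : H → EReal)
    (hproper : (∃ z, h z ≠ ⊤) ∧ ∀ z, h z ≠ ⊥)
    (hlsc : LowerSemicontinuous h)
    (hconv : ERealConvexOn h)
    (xb : H) (hmin : ∀ x, h xb ≤ h x) (r : ℝ) (hfin : h xb = (r : EReal))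
    (c : ℝ) (hc : 0 < c) (U : Set H) (hU : U ∈ 𝓝 xb)
    (heb : ∀ x ∈ U,
      Metric.infDist x {z : H | ∀ w, h z ≤ h w} ≤ c * ((h x - h xb).toReal) ^ (1/2 : ℝ)) :
    ∃ c' > (0 : ℝ), ∃ V ∈ 𝓝 xb, ∀ x ∈ V, h xb < h x →
      ENNReal.ofReal (c' * ((h x - h xb).toReal) ^ (1/2 : ℝ)) ≤
        Metric.infEDist 0 {u : H | ∀ z, h x + ((inner ℝ u (z - x) : ℝ) : EReal) ≤ h z} := by
  refine ⟨1/c, by positivity, U, hU, ?_⟩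
  intro x hxU hlt
  set S : Set H := {z : H | ∀ w, h z ≤ h w} with hS
  have hSclosed : IsClosed S := by
    have hEq : S = ⋂ w, h ⁻¹' Set.Iic (h w) := by
      ext z; simp [hS, Set.mem_iInter, Set.mem_preimage, Set.mem_Iic]
    rw [hEq]
    exact isClosed_iInter fun w => hlsc.isClosed_preimage (h w)
  have hSne : S.Nonempty := ⟨xb, hmin⟩
  by_cases htop : h x = ⊤
  · have h0 : (h x - h xb).toReal = 0 := by
      rw [htop, hfin]; simp
    rw [h0]
    simp [Real.zero_rpow (by norm_num : (1/2:ℝ) ≠ 0)]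
  · have hbot : h x ≠ ⊥ := hproper.2 x
    set a := (h x).toReal with ha
    have hxa : h x = (a : EReal) := (EReal.coe_toReal htop hbot).symm
    have har : r < a := by
      rw [hxa, hfin] at hlt; exact_mod_cast hlt
    have hdiff : (h x - h xb).toReal = a - r := by
      rw [hxa, hfin]
      exact EReal.toReal_sub (by simp) (by simp) (by simp) (by simp)
    rw [hdiff, Metric.le_infEDist]
    intro u hu
    obtain ⟨xs, hxsS, hxsd⟩ := hSclosed.exists_infDist_eq_dist hSne x
    have hxsmin : h xs = (r : EReal) := le_antisymm (hfin ▸ hxsS xb) (hfin ▸ hmin xs)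
    have key : a + (inner ℝ u (xs - x) : ℝ) ≤ r := by
      have h1 := hu xs
      rw [hxa, hxsmin] at h1
      exact_mod_cast h1
    set s := Real.sqrt (a - r) with hs
    have hsq : s * s = a - r := Real.mul_self_sqrt (by linarith)
    have hspos : 0 < s := Real.sqrt_pos.mpr (by linarith)
    have hrpow : (a - r) ^ (1/2 : ℝ) = s := by rw [hs, Real.sqrt_eq_rpow]
    have hdist : dist x xs ≤ c * s := by
      have h2 := heb x hxU
      rw [hdiff, hrpow, hxsd] at h2
      exact h2
    have hip : a - r ≤ (inner ℝ u (x - xs) : ℝ) := by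
      have : (x - xs) = -(xs - x) := by abel
      rw [this, inner_neg_right]; linarith
    have hcs : (inner ℝ u (x - xs) : ℝ) ≤ ‖u‖ * dist x xs := by
      rw [dist_eq_norm]; exact real_inner_le_norm u (x - xs)
    have hchain : s * s ≤ ‖u‖ * (c * s) := by
      rw [hsq]
      calc a - r ≤ (inner ℝ u (x - xs) : ℝ) := hip
        _ ≤ ‖u‖ * dist x xs := hcs
        _ ≤ ‖u‖ * (c * s) := by
            apply mul_le_mul_of_nonneg_left hdist (norm_nonneg u)
    have hnorm : 1/c * s ≤ ‖u‖ := by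
      have h3 : s ≤ ‖u‖ * c := by
        have := (mul_le_mul_iff_left₀ hspos).mp (by linarith [hchain] : s * s ≤ (‖u‖ * c) * s)
        exact this
      rw [one_div, inv_mul_eq_div, div_le_iff₀ hc]
      linarith
    calc ENNReal.ofReal (1/c * (a - r) ^ (1/2 : ℝ))
        ≤ ENNReal.ofReal ‖u‖ := by
          apply ENNReal.ofReal_le_ofReal
          rw [hrpow]; exact hnorm
      _ = edist 0 u := by
          rw [edist_comm, edist_zero_right, ofReal_norm]
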